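/- Let θ* ∈ ℝ^d with ‖θ*‖ ≤ 1, x₁, ..., x_N ∈ ℝ^d, η₁, ..., η_N ∈ ℝ, H a symmetric positive definite d×d matrix, and h ∈ ℝ^d. Define S = H + Σ_k x_k x_kᵀ, u = h + Σ_k x_k(x_kᵀθ* + η_k), and θ̂ = S⁻¹u. Then ‖θ* − θ̂‖_S ≤ ‖Hθ*‖_{H⁻¹} + ‖Σ_k x_k η_k‖_{(Σ_k x_k x_kᵀ + λ_min(H)·I)⁻¹} + ‖h‖_{H⁻¹}. -/

import Mathlib

open Matrix

set_option linter.unusedSectionVars false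
variable {n : Type*} [Fintype n] [DecidableEq n]

open scoped MatrixOrder in
lemma psd_cs {M : Matrix n n ℝ} (hM : M.PosSemidef) (a b : n → ℝ) :
    (a ⬝ᵥ M *ᵥ b) ^ 2 ≤ (a ⬝ᵥ M *ᵥ a) * (b ⬝ᵥ M *ᵥ b) := by
  obtain ⟨B, rfl⟩ := CStarAlgebra.nonneg_iff_eq_star_mul_self.mp hM.nonneg
  rw [Matrix.star_eq_conjTranspose]
  have key : ∀ u v : n → ℝ, u ⬝ᵥ (Bᴴ * B) *ᵥ v = (B *ᵥ u) ⬝ᵥ (B *ᵥ v) := by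
    intro u v
    rw [← mulVec_mulVec, dotProduct_mulVec, vecMul_conjTranspose]
    simp
  rw [key, key, key]
  have := real_inner_mul_inner_self_le
    ((WithLp.equiv 2 (n → ℝ)).symm (B *ᵥ a)) ((WithLp.equiv 2 (n → ℝ)).symm (B *ᵥ b))
  simp only [PiLp.inner_apply, RCLike.inner_apply, conj_trivial] at this
  simpa [dotProduct, pow_two, mul_comm] using this

lemma psd_nonneg {M : Matrix n n ℝ} (hM : M.PosSemidef) (a : n → ℝ) :
    0 ≤ a ⬝ᵥ M *ᵥ a := by
  simpa using hM.dotProduct_mulVec_nonneg a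

lemma psd_cross {M : Matrix n n ℝ} (hM : M.PosSemidef) (a b : n → ℝ) :
    a ⬝ᵥ M *ᵥ b ≤ Real.sqrt (a ⬝ᵥ M *ᵥ a) * Real.sqrt (b ⬝ᵥ M *ᵥ b) := by
  calc a ⬝ᵥ M *ᵥ b ≤ |a ⬝ᵥ M *ᵥ b| := le_abs_self _
    _ = Real.sqrt ((a ⬝ᵥ M *ᵥ b) ^ 2) := (Real.sqrt_sq_eq_abs _).symm
    _ ≤ Real.sqrt ((a ⬝ᵥ M *ᵥ a) * (b ⬝ᵥ M *ᵥ b)) :=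
        Real.sqrt_le_sqrt (psd_cs hM a b)
    _ = _ := Real.sqrt_mul (psd_nonneg hM a) _

lemma symm_dot {M : Matrix n n ℝ} (hM : M.IsHermitian) (a b : n → ℝ) :
    a ⬝ᵥ M *ᵥ b = b ⬝ᵥ M *ᵥ a := by
  rw [dotProduct_mulVec, dotProduct_comm, ← mulVec_transpose]
  have : Mᵀ = M := by simpa [Matrix.IsHermitian] using hM
  rw [this]

lemma psd_triangle {M : Matrix n n ℝ} (hM : M.PosSemidef) (a b : n → ℝ) :
    Real.sqrt ((a + b) ⬝ᵥ M *ᵥ (a + b)) ≤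
      Real.sqrt (a ⬝ᵥ M *ᵥ a) + Real.sqrt (b ⬝ᵥ M *ᵥ b) := by
  have h1 := psd_cross hM a b
  have ha := psd_nonneg hM a
  have hb := psd_nonneg hM b
  have hsa := Real.sq_sqrt ha
  have hsb := Real.sq_sqrt hb
  have hab : b ⬝ᵥ M *ᵥ a = a ⬝ᵥ M *ᵥ b := symm_dot hM.1 b a
  have expand : (a + b) ⬝ᵥ M *ᵥ (a + b)
      = a ⬝ᵥ M *ᵥ a + 2 * (a ⬝ᵥ M *ᵥ b) + b ⬝ᵥ M *ᵥ b := by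
    simp [Matrix.mulVec_add, dotProduct_add, add_dotProduct, hab]
    ring
  calc Real.sqrt ((a + b) ⬝ᵥ M *ᵥ (a + b))
      ≤ Real.sqrt ((Real.sqrt (a ⬝ᵥ M *ᵥ a) + Real.sqrt (b ⬝ᵥ M *ᵥ b)) ^ 2) := by
        apply Real.sqrt_le_sqrt
        rw [expand]
        nlinarith [Real.sqrt_nonneg (a ⬝ᵥ M *ᵥ a), Real.sqrt_nonneg (b ⬝ᵥ M *ᵥ b)]
    _ = _ := Real.sqrt_sq (by positivity)

lemma form_mono {A B : Matrix n n ℝ} (hAB : (B - A).PosSemidef) (y : n → ℝ) :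
    y ⬝ᵥ A *ᵥ y ≤ y ⬝ᵥ B *ᵥ y := by
  have := psd_nonneg hAB y
  rw [Matrix.sub_mulVec, dotProduct_sub] at this
  linarith

lemma inv_form_antitone {A B : Matrix n n ℝ} (hA : A.PosDef) (hB : B.PosDef)
    (hAB : (B - A).PosSemidef) (y : n → ℝ) :
    y ⬝ᵥ B⁻¹ *ᵥ y ≤ y ⬝ᵥ A⁻¹ *ᵥ y := by
  set z := B⁻¹ *ᵥ y with hz
  set t := y ⬝ᵥ B⁻¹ *ᵥ y with ht
  set s := y ⬝ᵥ A⁻¹ *ᵥ y with hs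
  have hs0 : 0 ≤ s := psd_nonneg hA.inv.posSemidef y
  have ht0 : 0 ≤ t := psd_nonneg hB.inv.posSemidef y
  have hzy : z ⬝ᵥ y = t := by rw [dotProduct_comm]
  have hAAinv : A *ᵥ (A⁻¹ *ᵥ y) = y := by
    rw [mulVec_mulVec, Matrix.mul_nonsing_inv _ hA.det_pos.ne'.isUnit, one_mulVec]
  have hBBinv : B *ᵥ z = y := by
    rw [hz, mulVec_mulVec, Matrix.mul_nonsing_inv _ hB.det_pos.ne'.isUnit, one_mulVec]
  have hzBz : z ⬝ᵥ B *ᵥ z = t := by rw [hBBinv, hzy]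
  have hwAw : (A⁻¹ *ᵥ y) ⬝ᵥ A *ᵥ (A⁻¹ *ᵥ y) = s := by
    rw [hAAinv, dotProduct_comm]
  have hcs : (z ⬝ᵥ A *ᵥ (A⁻¹ *ᵥ y)) ^ 2 ≤ (z ⬝ᵥ A *ᵥ z) * s := by
    rw [← hwAw]; exact psd_cs hA.posSemidef _ _
  rw [hAAinv, hzy] at hcs
  have hAB' : z ⬝ᵥ A *ᵥ z ≤ t := by rw [← hzBz]; exact form_mono hAB z
  have hzAz : 0 ≤ z ⬝ᵥ A *ᵥ z := psd_nonneg hA.posSemidef z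
  rcases eq_or_lt_of_le ht0 with h0 | h0
  · rw [← h0]; exact hs0
  · nlinarith

lemma smul_one_le_of_posDef [Nonempty n] {H : Matrix n n ℝ} (hH : H.PosDef) :
    (H - (⨅ i, hH.isHermitian.eigenvalues i) • (1 : Matrix n n ℝ)).PosSemidef := by
  set lam := ⨅ i, hH.isHermitian.eigenvalues i with hlam
  set U : Matrix n n ℝ := (hH.isHermitian.eigenvectorUnitary : Matrix n n ℝ)
  have hU : U * star U = 1 := by
    exact (Unitary.mul_star_self_of_mem hH.isHermitian.eigenvectorUnitary.2)
  have hspec := hH.isHermitian.spectral_theorem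
  have key : H - lam • (1 : Matrix n n ℝ)
      = U * Matrix.diagonal (fun i => hH.isHermitian.eigenvalues i - lam) * Uᴴ := by
    rw [← Matrix.star_eq_conjTranspose]
    have h1 : lam • (1 : Matrix n n ℝ) = U * (lam • 1) * star U := by
      rw [Matrix.mul_smul, Matrix.smul_mul, mul_one, hU]
    calc H - lam • (1 : Matrix n n ℝ)
        = U * Matrix.diagonal (RCLike.ofReal ∘ hH.isHermitian.eigenvalues) * star U
          - U * (lam • 1) * star U := by rw [← h1]; exact congrArg (· - _) hspec
      _ = U * (Matrix.diagonal (RCLike.ofReal ∘ hH.isHermitian.eigenvalues) - lam • 1) * star U := by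
          noncomm_ring
      _ = _ := by
          congr 1
          congr 1
          rw [Matrix.smul_one_eq_diagonal, ← Matrix.diagonal_sub]
          rfl
  rw [key]
  refine Matrix.PosSemidef.mul_mul_conjTranspose_same ?_ U
  refine Matrix.posSemidef_diagonal_iff.mpr fun i => ?_
  simp only [sub_nonneg]
  exact ciInf_le (Finite.bddBelow_range _) i

lemma vecMulVec_mulVec' (v w u : n → ℝ) :
    (Matrix.vecMulVec v w) *ᵥ u = (w ⬝ᵥ u) • v := by
  ext i
  simp [Matrix.mulVec, Matrix.vecMulVec, dotProduct, Finset.mul_sum,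
    mul_comm, mul_left_comm, Pi.smul_apply, Finset.sum_mul]

lemma sum_mulVec' {ι : Type*} (s : Finset ι) (A : ι → Matrix n n ℝ) (y : n → ℝ) :
    (∑ k ∈ s, A k) *ᵥ y = ∑ k ∈ s, A k *ᵥ y := by
  induction s using Finset.cons_induction with
  | empty => simp
  | cons a s ha ih => simp [Matrix.add_mulVec, ih]

lemma dotProduct_sum' {ι : Type*} (s : Finset ι) (y : n → ℝ) (f : ι → (n → ℝ)) :
    y ⬝ᵥ (∑ k ∈ s, f k) = ∑ k ∈ s, y ⬝ᵥ f k := by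
  induction s using Finset.cons_induction with
  | empty => simp
  | cons a s ha ih => simp [dotProduct_add, ih]

lemma sum_outer_psd {N : ℕ} (x : Fin N → (n → ℝ)) :
    (∑ k, Matrix.vecMulVec (x k) (x k)).PosSemidef := by
  refine Matrix.PosSemidef.of_dotProduct_mulVec_nonneg ?_ ?_
  · show _ = _
    rw [Matrix.conjTranspose_sum]
    refine Finset.sum_congr rfl fun k _ => ?_
    ext i j
    simp [Matrix.vecMulVec, mul_comm]
  · intro y
    rw [sum_mulVec', dotProduct_sum']
    refine Finset.sum_nonneg fun k _ => ?_
    rw [vecMulVec_mulVec', dotProduct_smul]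
    simp only [star_trivial, smul_eq_mul]
    rw [dotProduct_comm (x k) y]
    exact mul_self_nonneg _

/-- Deterministic decomposition for the confidence ellipsoid of the privatized
ridge-type estimator, separating perturbation bias, noise term, and privatizer
vector noise. -/
theorem stmt18 {d N : ℕ} (θstar : Fin d → ℝ)
    (hθ : Real.sqrt (θstar ⬝ᵥ θstar) ≤ 1)
    (x : Fin N → (Fin d → ℝ)) (η : Fin N → ℝ)
    (H : Matrix (Fin d) (Fin d) ℝ) (hH : H.PosDef) (h : Fin d → ℝ)
    (S : Matrix (Fin d) (Fin d) ℝ) (u θhat : Fin d → ℝ)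
    (hS : S = H + ∑ k, Matrix.vecMulVec (x k) (x k))
    (hu : u = h + ∑ k, (x k ⬝ᵥ θstar + η k) • x k)
    (hθhat : θhat = S⁻¹.mulVec u) :
    Real.sqrt ((θstar - θhat) ⬝ᵥ S.mulVec (θstar - θhat)) ≤
      Real.sqrt (H.mulVec θstar ⬝ᵥ H⁻¹.mulVec (H.mulVec θstar)) +
      Real.sqrt ((∑ k, η k • x k) ⬝ᵥ
        ((∑ k, Matrix.vecMulVec (x k) (x k)) +
          (⨅ i, hH.isHermitian.eigenvalues i) • (1 : Matrix (Fin d) (Fin d) ℝ))⁻¹.mulVec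
        (∑ k, η k • x k)) +
      Real.sqrt (h ⬝ᵥ H⁻¹.mulVec h) := by
  classical
  cases isEmpty_or_nonempty (Fin d) with
  | inl hd =>
    simp only [dotProduct, Finset.univ_eq_empty, Finset.sum_empty, Real.sqrt_zero]
    norm_num
  | inr hd =>
  set G := ∑ k, Matrix.vecMulVec (x k) (x k) with hG
  have hGpsd : G.PosSemidef := sum_outer_psd x
  have hSpd : S.PosDef := hS ▸ hH.add_posSemidef hGpsd
  set lam := ⨅ i, hH.isHermitian.eigenvalues i with hlam
  have hlampos : 0 < lam := by
    obtain ⟨i, hi⟩ := exists_eq_ciInf_of_finite (f := hH.isHermitian.eigenvalues)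
    rw [hlam, ← hi]; exact hH.eigenvalues_pos i
  set T := G + lam • (1 : Matrix (Fin d) (Fin d) ℝ) with hT
  have hTpd : T.PosDef := by
    refine Matrix.PosDef.posSemidef_add hGpsd ?_
    rw [Matrix.smul_one_eq_diagonal]
    exact Matrix.posDef_diagonal_iff.mpr fun i => hlampos
  have hSsubH : (S - H).PosSemidef := by
    rw [hS]; simpa using hGpsd
  have hSsubT : (S - T).PosSemidef := by
    have he : S - T = H - lam • 1 := by rw [hS, hT]; abel
    rw [he]; exact smul_one_le_of_posDef hH
  set nvec := ∑ k, η k • x k with hn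
  set m := H *ᵥ θstar - h - nvec with hm
  have hSm : S *ᵥ θstar - u = m := by
    rw [hS, hu, Matrix.add_mulVec, sum_mulVec']
    have h1 : ∀ k, (Matrix.vecMulVec (x k) (x k)) *ᵥ θstar = (x k ⬝ᵥ θstar) • x k :=
      fun k => vecMulVec_mulVec' _ _ _
    have h2 : ∀ k : Fin N, (x k ⬝ᵥ θstar + η k) • x k
        = (x k ⬝ᵥ θstar) • x k + η k • x k := fun k => add_smul _ _ _
    rw [Finset.sum_congr rfl fun k _ => h1 k, Finset.sum_congr rfl fun k _ => h2 k,
      Finset.sum_add_distrib, hm, hn]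
    abel
  have hdiff : θstar - θhat = S⁻¹ *ᵥ m := by
    rw [hθhat, ← hSm]
    show θstar - S⁻¹ *ᵥ u = _
    rw [Matrix.mulVec_sub, mulVec_mulVec,
      Matrix.nonsing_inv_mul _ hSpd.det_pos.ne'.isUnit, one_mulVec]
  have hLHS : (θstar - θhat) ⬝ᵥ S *ᵥ (θstar - θhat) = m ⬝ᵥ S⁻¹ *ᵥ m := by
    rw [hdiff, mulVec_mulVec, Matrix.mul_nonsing_inv _ hSpd.det_pos.ne'.isUnit,
      one_mulVec, dotProduct_comm]
  have hSinv : S⁻¹.PosSemidef := hSpd.inv.posSemidef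
  have hneg : ∀ v : Fin d → ℝ, (-v) ⬝ᵥ S⁻¹ *ᵥ (-v) = v ⬝ᵥ S⁻¹ *ᵥ v := by
    intro v; rw [Matrix.mulVec_neg, dotProduct_neg, neg_dotProduct, neg_neg]
  have hmdec : m = (H *ᵥ θstar + -nvec) + -h := by rw [hm]; abel
  have tri1 : Real.sqrt (m ⬝ᵥ S⁻¹ *ᵥ m) ≤
      Real.sqrt ((H *ᵥ θstar + -nvec) ⬝ᵥ S⁻¹ *ᵥ (H *ᵥ θstar + -nvec)) +
        Real.sqrt (h ⬝ᵥ S⁻¹ *ᵥ h) := by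
    rw [hmdec, ← hneg h]
    exact psd_triangle hSinv _ _
  have tri2 : Real.sqrt ((H *ᵥ θstar + -nvec) ⬝ᵥ S⁻¹ *ᵥ (H *ᵥ θstar + -nvec)) ≤
      Real.sqrt ((H *ᵥ θstar) ⬝ᵥ S⁻¹ *ᵥ (H *ᵥ θstar)) +
        Real.sqrt (nvec ⬝ᵥ S⁻¹ *ᵥ nvec) := by
    rw [← hneg nvec]
    exact psd_triangle hSinv _ _
  have c1 : (H *ᵥ θstar) ⬝ᵥ S⁻¹ *ᵥ (H *ᵥ θstar)
      ≤ (H *ᵥ θstar) ⬝ᵥ H⁻¹ *ᵥ (H *ᵥ θstar) := inv_form_antitone hH hSpd hSsubH _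
  have c2 : nvec ⬝ᵥ S⁻¹ *ᵥ nvec ≤ nvec ⬝ᵥ T⁻¹ *ᵥ nvec :=
    inv_form_antitone hTpd hSpd hSsubT _
  have c3 : h ⬝ᵥ S⁻¹ *ᵥ h ≤ h ⬝ᵥ H⁻¹ *ᵥ h := inv_form_antitone hH hSpd hSsubH _
  calc Real.sqrt ((θstar - θhat) ⬝ᵥ S *ᵥ (θstar - θhat))
      = Real.sqrt (m ⬝ᵥ S⁻¹ *ᵥ m) := by rw [hLHS]
    _ ≤ (Real.sqrt ((H *ᵥ θstar) ⬝ᵥ S⁻¹ *ᵥ (H *ᵥ θstar)) +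
          Real.sqrt (nvec ⬝ᵥ S⁻¹ *ᵥ nvec)) + Real.sqrt (h ⬝ᵥ S⁻¹ *ᵥ h) :=
        le_trans tri1 (add_le_add tri2 le_rfl)
    _ ≤ _ := by
        refine add_le_add (add_le_add ?_ ?_) ?_ <;>
          exact Real.sqrt_le_sqrt (by assumption)
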